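/- Under the assumptions of the previous statement, for any continuous function φ : K → ℝ, lim_{s→∞} ∫_K φ(p) ρ_s(p) dp = φ(m); that is, e^{−sα}/‖e^{−sα}‖_{L¹(K)} converges weakly to the Dirac delta at m. -/

import Mathlib

open MeasureTheory Filter

private lemma div_le_div_of_le_left' {a b c : ℝ} (h : a ≤ b) (hc : 0 < c) :
    a / c ≤ b / c := by gcongr

private lemma div_le_div_of_nonneg_left' {a b c : ℝ} (ha : 0 ≤ a) (hb : 0 < b)
    (hbc : b ≤ c) : a / c ≤ a / b := by
  rw [div_le_div_iff₀ (hb.trans_le hbc) hb]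
  exact mul_le_mul_of_nonneg_left hbc ha


set_option maxHeartbeats 1000000

/-- Under the quadratic concentration assumptions, `e^{-sα}/‖e^{-sα}‖_{L¹(K)}`
converges weakly to the Dirac delta at `m`: for any continuous `φ` on `K`,
`∫_K φ ρ_s → φ(m)` as `s → ∞`. -/
theorem stmt6 (l : ℕ) (K : Set (EuclideanSpace ℝ (Fin l))) (hK : IsCompact K)
    (m : EuclideanSpace ℝ (Fin l)) (hm : m ∈ interior K)
    (α : EuclideanSpace ℝ (Fin l) → ℝ) (hα : ContinuousOn α K)
    (C₁ C₂ : ℝ) (hC₁ : 0 < C₁) (hC₂ : 0 < C₂)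
    (hbound : ∀ p ∈ K, α m + C₁ * ‖p - m‖ ^ 2 ≤ α p ∧ α p ≤ α m + C₂ * ‖p - m‖ ^ 2) :
    ∀ φ : EuclideanSpace ℝ (Fin l) → ℝ, ContinuousOn φ K →
      Tendsto
        (fun s : ℝ => (∫ p in K, φ p * Real.exp (-s * α p)) / ∫ p in K, Real.exp (-s * α p))
        atTop (nhds (φ m)) := by
  intro φ hφ
  have hmK : m ∈ K := interior_subset hm
  set β : EuclideanSpace ℝ (Fin l) → ℝ := fun p => α p - α m with hβdef
  have hβcont : ContinuousOn β K := hα.sub continuousOn_const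
  have hβlb : ∀ p ∈ K, C₁ * ‖p - m‖ ^ 2 ≤ β p := by
    intro p hp; have := (hbound p hp).1; simp only [hβdef]; linarith
  have hβub : ∀ p ∈ K, β p ≤ C₂ * ‖p - m‖ ^ 2 := by
    intro p hp; have := (hbound p hp).2; simp only [hβdef]; linarith
  -- reduce to β version
  have key : ∀ s : ℝ,
      (∫ p in K, φ p * Real.exp (-s * α p)) / ∫ p in K, Real.exp (-s * α p)
      = (∫ p in K, φ p * Real.exp (-s * β p)) / ∫ p in K, Real.exp (-s * β p) := by
    intro s
    have h1 : ∀ p, Real.exp (-s * α p) = Real.exp (-s * α m) * Real.exp (-s * β p) := by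
      intro p; rw [← Real.exp_add]; congr 1; simp only [hβdef]; ring
    have h2 : ∀ p, φ p * Real.exp (-s * α p)
        = Real.exp (-s * α m) * (φ p * Real.exp (-s * β p)) := by
      intro p; rw [h1]; ring
    have e1 : (∫ p in K, φ p * Real.exp (-s * α p))
        = ∫ p in K, Real.exp (-s * α m) * (φ p * Real.exp (-s * β p)) :=
      integral_congr_ae (Filter.Eventually.of_forall fun p => h2 p)
    have e2 : (∫ p in K, Real.exp (-s * α p))
        = ∫ p in K, Real.exp (-s * α m) * Real.exp (-s * β p) :=
      integral_congr_ae (Filter.Eventually.of_forall fun p => h1 p)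
    rw [e1, e2, MeasureTheory.integral_const_mul, MeasureTheory.integral_const_mul,
      mul_div_mul_left _ _ (Real.exp_ne_zero _)]
  apply Tendsto.congr (fun s => (key s).symm)
  -- bounds on φ
  obtain ⟨M₀, hM₀⟩ := hK.exists_bound_of_continuousOn hφ
  set M : ℝ := max M₀ 1 with hMdef
  have hM1 : (1:ℝ) ≤ M := le_max_right _ _
  have hMpos : 0 < M := lt_of_lt_of_le one_pos hM1
  have hMb : ∀ p ∈ K, |φ p| ≤ M := fun p hp =>
    le_trans (by simpa [Real.norm_eq_abs] using hM₀ p hp) (le_max_left _ _)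
  -- ball inside K
  obtain ⟨r₀, hr₀pos, hr₀ball⟩ := Metric.mem_nhds_iff.mp (mem_interior_iff_mem_nhds.mp hm)
  have hKmeas : MeasurableSet K := hK.measurableSet
  have hKfin : volume K < ⊤ := hK.measure_lt_top
  set W : ℝ := (volume K).toReal with hWdef
  have hW0 : 0 ≤ W := ENNReal.toReal_nonneg
  rw [Metric.tendsto_nhds]
  intro ε hε
  -- continuity of φ at m within K
  obtain ⟨δ, hδpos, hδ⟩ := Metric.continuousWithinAt_iff.mp (hφ m hmK) (ε/2) (by linarith)
  -- choose small radius r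
  set r : ℝ := min (r₀/2) (Real.sqrt (C₁ * δ^2 / (2*C₂))) with hrdef
  have hrpos : 0 < r := lt_min (by linarith) (Real.sqrt_pos.mpr (by positivity))
  have hball : Metric.ball m r ⊆ K := fun x hx => hr₀ball (by
    have : r ≤ r₀ := le_trans (min_le_left _ _) (by linarith)
    exact Metric.ball_subset_ball this hx)
  have hr2 : C₂ * r^2 ≤ C₁ * δ^2 / 2 := by
    have h1 : r ≤ Real.sqrt (C₁ * δ^2 / (2*C₂)) := min_le_right _ _
    have h2 : r^2 ≤ C₁ * δ^2 / (2*C₂) := by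
      calc r^2 ≤ (Real.sqrt (C₁ * δ^2 / (2*C₂)))^2 := by
            exact pow_le_pow_left₀ hrpos.le h1 2
        _ = C₁ * δ^2 / (2*C₂) := Real.sq_sqrt (by positivity)
    calc C₂ * r^2 ≤ C₂ * (C₁ * δ^2 / (2*C₂)) := by nlinarith
      _ = C₁ * δ^2 / 2 := by field_simp
  set a : ℝ := C₁ * δ^2 - C₂ * r^2 with hadef
  have hapos : 0 < a := by
    have : 0 < C₁ * δ^2 := by positivity
    simp only [hadef]; linarith
  set V : ℝ := (volume (Metric.ball m r)).toReal with hVdef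
  have hVpos : 0 < V := by
    apply ENNReal.toReal_pos
    · exact (Metric.measure_ball_pos volume m hrpos).ne'
    · exact (measure_ball_lt_top).ne
  -- eventually bound
  have htend : Tendsto (fun s : ℝ => (2*M*W/V) * Real.exp (-s * a)) atTop (nhds 0) := by
    have h1 : Tendsto (fun s : ℝ => -s * a) atTop atBot := by
      have := tendsto_id.const_mul_atTop_of_neg (r := -a) (by linarith)
      simpa [mul_comm] using this
    have h2 : Tendsto (fun s : ℝ => Real.exp (-s * a)) atTop (nhds 0) :=
      Real.tendsto_exp_atBot.comp h1
    simpa using h2.const_mul (2*M*W/V)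
  have hev : ∀ᶠ s : ℝ in atTop, (2*M*W/V) * Real.exp (-s * a) < ε/2 :=
    htend.eventually_lt_const (by linarith)
  filter_upwards [hev, eventually_ge_atTop (0:ℝ)] with s hse hs0
  -- now s fixed
  set g : EuclideanSpace ℝ (Fin l) → ℝ := fun p => Real.exp (-s * β p) with hgdef
  have hgcont : ContinuousOn g K := Real.continuous_exp.comp_continuousOn
    (continuousOn_const.mul hβcont)
  have hgpos : ∀ p, 0 < g p := fun p => Real.exp_pos _
  have hIg : IntegrableOn g K volume := hgcont.integrableOn_compact hK
  have hIφg : IntegrableOn (fun p => φ p * g p) K volume :=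
    (hφ.mul hgcont).integrableOn_compact hK
  set D : ℝ := ∫ p in K, g p with hDdef
  -- lower bound on D
  have hDlb : V * Real.exp (-s * (C₂ * r^2)) ≤ D := by
    have hIgball : IntegrableOn g (Metric.ball m r) volume := hIg.mono_set hball
    have step1 : ∫ p in Metric.ball m r, Real.exp (-s * (C₂ * r^2))
        ≤ ∫ p in Metric.ball m r, g p := by
      apply setIntegral_mono_on (integrableOn_const measure_ball_lt_top.ne)
        hIgball measurableSet_ball
      intro p hp
      apply Real.exp_le_exp.mpr
      have h1 : β p ≤ C₂ * ‖p - m‖^2 := hβub p (hball hp)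
      have h2 : ‖p - m‖ < r := by
        have := Metric.mem_ball.mp hp; rwa [dist_eq_norm] at this
      have h3 : ‖p - m‖^2 ≤ r^2 := pow_le_pow_left₀ (norm_nonneg _) h2.le 2
      have hbp : β p ≤ C₂ * r^2 := by nlinarith
      nlinarith [mul_le_mul_of_nonneg_left hbp hs0]
    have step2 : ∫ p in Metric.ball m r, g p ≤ D := by
      apply setIntegral_mono_set hIg
      · exact Filter.Eventually.of_forall (fun p => (hgpos p).le)
      · exact Filter.Eventually.of_forall hball
    calc V * Real.exp (-s * (C₂ * r^2))
        = ∫ p in Metric.ball m r, Real.exp (-s * (C₂ * r^2)) := by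
          rw [setIntegral_const, smul_eq_mul, measureReal_def]
      _ ≤ ∫ p in Metric.ball m r, g p := step1
      _ ≤ D := step2
  have hDpos : 0 < D := lt_of_lt_of_le (by positivity) hDlb
  -- numerator
  have hnum : (∫ p in K, φ p * g p) / D - φ m = (∫ p in K, (φ p - φ m) * g p) / D := by
    rw [eq_div_iff hDpos.ne', sub_mul, div_mul_cancel₀ _ hDpos.ne']
    have : ∫ p in K, (φ p - φ m) * g p
        = (∫ p in K, φ p * g p) - ∫ p in K, φ m * g p := by
      simp_rw [sub_mul]
      exact integral_sub hIφg (hIg.const_mul (φ m))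
    rw [this, MeasureTheory.integral_const_mul]
  set T : ℝ := ∫ p in K, (φ p - φ m) * g p with hTdef
  -- bound |T|
  have hTb : |T| ≤ ε/2 * D + 2*M*W * Real.exp (-s * (C₁ * δ^2)) := by
    have habs : |T| ≤ ∫ p in K, |(φ p - φ m) * g p| := by
      simpa only [Real.norm_eq_abs] using
        norm_integral_le_integral_norm (μ := volume.restrict K) (fun p => (φ p - φ m) * g p)
    have hIrhs : IntegrableOn
        (fun p => ε/2 * g p + 2*M * Real.exp (-s * (C₁ * δ^2))) K volume :=
      (hIg.const_mul (ε/2)).add (integrableOn_const hKfin.ne)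
    have hIabs : IntegrableOn (fun p => |(φ p - φ m) * g p|) K volume :=
      (((hφ.sub continuousOn_const).mul hgcont).integrableOn_compact hK).abs
    have hptw : ∀ p ∈ K, |(φ p - φ m) * g p|
        ≤ ε/2 * g p + 2*M * Real.exp (-s * (C₁ * δ^2)) := by
      intro p hp
      rw [abs_mul, abs_of_pos (hgpos p)]
      by_cases hcase : dist p m < δ
      · have h1 : |φ p - φ m| ≤ ε/2 := by
          have := hδ hp hcase
          rw [Real.dist_eq] at this; linarith
        have h2 : |φ p - φ m| * g p ≤ ε/2 * g p :=
          mul_le_mul_of_nonneg_right h1 (hgpos p).le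
        have h3 : 0 ≤ 2*M * Real.exp (-s * (C₁ * δ^2)) := by positivity
        linarith
      · push_neg at hcase
        have hd : δ ≤ ‖p - m‖ := by rwa [dist_eq_norm] at hcase
        have h1 : |φ p - φ m| ≤ 2*M := by
          have := hMb p hp
          have h2 := hMb m hmK
          calc |φ p - φ m| ≤ |φ p| + |φ m| := abs_sub _ _
            _ ≤ 2*M := by linarith
        have h2 : g p ≤ Real.exp (-s * (C₁ * δ^2)) := by
          apply Real.exp_le_exp.mpr
          have hb := hβlb p hp
          have hdd : δ^2 ≤ ‖p - m‖^2 := pow_le_pow_left₀ hδpos.le hd 2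
          have hb2 : C₁ * δ^2 ≤ β p := by nlinarith
          linarith [mul_le_mul_of_nonneg_left hb2 hs0]
        have h3 : |φ p - φ m| * g p ≤ 2*M * Real.exp (-s * (C₁ * δ^2)) :=
          mul_le_mul h1 h2 (hgpos p).le (by positivity)
        have h4 : 0 ≤ ε/2 * g p := by positivity
        linarith
    calc |T| ≤ ∫ p in K, |(φ p - φ m) * g p| := habs
      _ ≤ ∫ p in K, (ε/2 * g p + 2*M * Real.exp (-s * (C₁ * δ^2))) :=
          setIntegral_mono_on hIabs hIrhs hKmeas hptw
      _ = ε/2 * D + 2*M*W * Real.exp (-s * (C₁ * δ^2)) := by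
          rw [integral_add (hIg.const_mul (ε/2)) (integrableOn_const hKfin.ne),
            MeasureTheory.integral_const_mul, setIntegral_const, smul_eq_mul, measureReal_def, ← hWdef]
          ring
  -- final estimate
  rw [Real.dist_eq]
  have hchg : (∫ p in K, φ p * Real.exp (-s * β p)) = ∫ p in K, φ p * g p := rfl
  rw [hchg, hnum, abs_div, abs_of_pos hDpos]
  have hWpos : 0 < W := by
    apply ENNReal.toReal_pos
    · exact ((Metric.measure_ball_pos volume m hrpos).trans_le
        (measure_mono hball)).ne'
    · exact hKfin.ne
  have hfrac : |T| / D ≤ ε/2 + (2*M*W/V) * Real.exp (-s * a) := by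
    have h1 : |T| / D ≤ (ε/2 * D + 2*M*W * Real.exp (-s * (C₁ * δ^2))) / D :=
      div_le_div_of_le_left' hTb hDpos
    have h2 : (ε/2 * D + 2*M*W * Real.exp (-s * (C₁ * δ^2))) / D
        = ε/2 + (2*M*W * Real.exp (-s * (C₁ * δ^2))) / D := by
      rw [add_div, mul_div_assoc, div_self hDpos.ne', mul_one]
    have h3 : (2*M*W * Real.exp (-s * (C₁ * δ^2))) / D
        ≤ (2*M*W * Real.exp (-s * (C₁ * δ^2))) / (V * Real.exp (-s * (C₂ * r^2))) :=
      div_le_div_of_nonneg_left' (by positivity) (by positivity) hDlb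
    have h4 : (2*M*W * Real.exp (-s * (C₁ * δ^2))) / (V * Real.exp (-s * (C₂ * r^2)))
        = (2*M*W/V) * Real.exp (-s * a) := by
      rw [show -s * a = (-s * (C₁ * δ^2)) - (-s * (C₂ * r^2)) by
        simp only [hadef]; ring, Real.exp_sub]
      have he : Real.exp (-s * (C₂ * r^2)) ≠ 0 := Real.exp_ne_zero _
      field_simp
    rw [h4] at h3
    rw [h2] at h1
    linarith
  linarith [hse, hfrac]
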